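/- (Intersecting Balls Property) Let v_1, ..., v_n be points in ℝ^m (n ≥ 1), let r_1, ..., r_n be positive reals, and let B_i = {x ∈ ℝ^m : d(x, v_i) < r_i} be the corresponding open balls. Suppose p ∈ ℝ^m is a common boundary point of all the balls, i.e., d(p, v_i) = r_i for all i. Then p ∈ conv({v_1, ..., v_n}) if and only if (⋂_{i=1}^n B_i) ∩ conv({v_1, ..., v_n}) = ∅. -/

import Mathlib

/-- **Intersecting Balls Property**. If `p` is a common boundary point of the open balls
`B i = ball (v i) (r i)`, then `p ∈ conv({v 1, …, v n})` iff the intersection of the open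
balls misses `conv({v 1, …, v n})`. -/
theorem intersecting_balls_property {m n : ℕ} (hn : 0 < n)
    (v : Fin n → EuclideanSpace ℝ (Fin m)) (r : Fin n → ℝ) (hr : ∀ i, 0 < r i)
    (p : EuclideanSpace ℝ (Fin m)) (hp : ∀ i, dist p (v i) = r i) :
    p ∈ convexHull ℝ (Set.range v) ↔
      (⋂ i : Fin n, Metric.ball (v i) (r i)) ∩ convexHull ℝ (Set.range v) = ∅ := by
  set K := convexHull ℝ (Set.range v) with hKdef
  have hKconv : Convex ℝ K := convex_convexHull ℝ _
  constructor
  · intro hpK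
    by_contra h
    rw [← Ne, ← Set.nonempty_iff_ne_empty] at h
    obtain ⟨x, hxB, hxK⟩ := h
    have hlin : IsLinearMap ℝ (fun w : EuclideanSpace ℝ (Fin m) => (inner ℝ (p - x) w : ℝ)) :=
      ⟨fun a b => inner_add_right _ _ _, fun c a => real_inner_smul_right _ _ _⟩
    have hconv : Convex ℝ {w : EuclideanSpace ℝ (Fin m) |
        (inner ℝ (p - x) w : ℝ) < (‖p‖ ^ 2 - ‖x‖ ^ 2) / 2} :=
      convex_halfSpace_lt hlin _
    have hsub : K ⊆ {w : EuclideanSpace ℝ (Fin m) |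
        (inner ℝ (p - x) w : ℝ) < (‖p‖ ^ 2 - ‖x‖ ^ 2) / 2} := by
      rw [hKdef]
      apply convexHull_min _ hconv
      rintro _ ⟨i, rfl⟩
      have hx : dist x (v i) < r i := by
        have := Set.mem_iInter.mp hxB i
        simpa [Metric.mem_ball] using this
      rw [← hp i] at hx
      have h1 : ‖x - v i‖ < ‖p - v i‖ := by simpa [dist_eq_norm] using hx
      have h2 : ‖x - v i‖ ^ 2 < ‖p - v i‖ ^ 2 := by
        have := norm_nonneg (x - v i); nlinarith
      rw [norm_sub_sq_real, norm_sub_sq_real] at h2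
      have e1 : (inner ℝ (p - x) (v i) : ℝ) = inner ℝ p (v i) - inner ℝ x (v i) :=
        inner_sub_left _ _ _
      simp only [Set.mem_setOf_eq]
      linarith
    have hpf := hsub hpK
    simp only [Set.mem_setOf_eq] at hpf
    have e2 : (inner ℝ (p - x) p : ℝ) = ‖p‖ ^ 2 - inner ℝ x p := by
      rw [inner_sub_left, real_inner_self_eq_norm_sq]
    have e3 : ‖p - x‖ ^ 2 = ‖p‖ ^ 2 - 2 * inner ℝ p x + ‖x‖ ^ 2 := norm_sub_sq_real p x
    have e4 : (inner ℝ x p : ℝ) = inner ℝ p x := real_inner_comm _ _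
    nlinarith [sq_nonneg ‖p - x‖]
  · intro hempty
    by_contra hpK
    have hKcomp : IsCompact K := (Set.finite_range v).isCompact_convexHull ℝ
    have hKcomplete : IsComplete K := hKcomp.isComplete
    have hKne : K.Nonempty := ⟨v ⟨0, hn⟩, subset_convexHull ℝ _ ⟨⟨0, hn⟩, rfl⟩⟩
    haveI : Nonempty K := hKne.to_subtype
    obtain ⟨q, hqK, hq⟩ := exists_norm_eq_iInf_of_complete_convex hKne hKcomplete hKconv p
    have hineq := (norm_eq_iInf_iff_real_inner_le_zero hKconv hqK).mp hq
    have hpq : p ≠ q := fun h => hpK (h ▸ hqK)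
    have hpq2 : 0 < ‖p - q‖ ^ 2 := by
      have := norm_sub_pos_iff.mpr hpq; positivity
    have hqball : q ∈ ⋂ i : Fin n, Metric.ball (v i) (r i) := by
      refine Set.mem_iInter.mpr fun i => ?_
      have hvK : v i ∈ K := subset_convexHull ℝ _ ⟨i, rfl⟩
      have hin : (inner ℝ (p - q) (v i - q) : ℝ) ≤ 0 := hineq (v i) hvK
      have hdecomp : p - v i = (p - q) + (q - v i) := by abel
      have e5 : ‖p - v i‖ ^ 2 =
          ‖p - q‖ ^ 2 + 2 * inner ℝ (p - q) (q - v i) + ‖q - v i‖ ^ 2 := by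
        rw [hdecomp]; exact norm_add_sq_real _ _
      have e6 : (inner ℝ (p - q) (q - v i) : ℝ) = -inner ℝ (p - q) (v i - q) := by
        rw [← inner_neg_right]; congr 1; abel
      have h2 : ‖q - v i‖ ^ 2 < ‖p - v i‖ ^ 2 := by
        rw [e5, e6]; linarith
      have h3 : ‖q - v i‖ < ‖p - v i‖ :=
        lt_of_pow_lt_pow_left₀ 2 (norm_nonneg _) h2
      have : dist q (v i) < dist p (v i) := by simpa [dist_eq_norm] using h3
      rw [hp i] at this
      exact Metric.mem_ball.mpr this
    have : q ∈ (⋂ i : Fin n, Metric.ball (v i) (r i)) ∩ K := ⟨hqball, hqK⟩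
    rw [hempty] at this
    exact this
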